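/- For every natural numbers n and k, the B-analogue of the Stirling number of the second kind satisfies the exponential generating function identity Σ_{k≥0} Σ_{n≥k} S_B(n,k) (t^n/n!) y^k = e^{(y/2)(e^{2t}−1)} · e^{t} as formal power series. -/

import Mathlib

/-- The Stirling numbers of the second kind. -/
def stirling2 : ℕ → ℕ → ℕ
  | 0, 0 => 1
  | 0, _ + 1 => 0
  | _ + 1, 0 => 0
  | n + 1, k + 1 => (k + 1) * stirling2 n (k + 1) + stirling2 n k

/-- The `B`-analogue of the Stirling numbers of the second kind:
`S_B(n,k) = Σ_{m=k}^{n} 2^{m−k} · binom(n,m) · S(m,k)`. -/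
def stirlingB2 (n k : ℕ) : ℕ :=
  ∑ m ∈ Finset.Icc k n, 2 ^ (m - k) * n.choose m * stirling2 m k

lemma mul_choose_key (j k : ℕ) :
    j * j.choose k = (k+1) * j.choose (k+1) + k * j.choose k := by
  rcases le_or_gt k j with h | h
  · have h1 : j.choose (k+1) * (k+1) = j.choose k * (j - k) := Nat.choose_succ_right_eq j k
    have h2 : (k+1) * j.choose (k+1) + k * j.choose k = j.choose k * ((j - k) + k) := by
      rw [Nat.mul_add, ← h1]; ring
    rw [h2, Nat.sub_add_cancel h, Nat.mul_comm]
  · rw [Nat.choose_eq_zero_of_lt h, Nat.choose_eq_zero_of_lt (h.trans k.lt_succ_self)]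
    simp

lemma stirling2_eq_zero_of_lt : ∀ {n k : ℕ}, n < k → stirling2 n k = 0 := by
  intro n
  induction n with
  | zero => intro k hk; match k, hk with | k+1, _ => rfl
  | succ n ih =>
    intro k hk
    match k, hk with
    | k+1, hk =>
      have h1 : n < k := Nat.lt_of_succ_lt_succ hk
      show (k + 1) * stirling2 n (k + 1) + stirling2 n k = 0
      rw [ih (h1.trans k.lt_succ_self), ih h1]; simp

theorem pow_eq_sum_stirling2 (m j : ℕ) :
    j ^ m = ∑ k ∈ Finset.range (m + 1), stirling2 m k * k.factorial * j.choose k := by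
  induction m with
  | zero => simp [stirling2]
  | succ m ih =>
    have e1 : ∑ k ∈ Finset.range (m + 2), stirling2 (m+1) k * k.factorial * j.choose k
        = ∑ k ∈ Finset.range (m + 1),
            stirling2 (m+1) (k+1) * (k+1).factorial * j.choose (k+1) := by
      rw [Finset.sum_range_succ']
      simp [stirling2]
    have e2 : ∀ k, stirling2 (m+1) (k+1) * (k+1).factorial * j.choose (k+1)
        = (k+1) * stirling2 m (k+1) * (k+1).factorial * j.choose (k+1)
          + stirling2 m k * (k+1).factorial * j.choose (k+1) := by
      intro k; show ((k + 1) * stirling2 m (k + 1) + stirling2 m k) * _ * _ = _; ring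
    have e3 : ∑ k ∈ Finset.range (m+1), (k+1) * stirling2 m (k+1) * (k+1).factorial * j.choose (k+1)
        = ∑ k ∈ Finset.range (m+1), k * (stirling2 m k * k.factorial * j.choose k) := by
      rw [Finset.sum_range_succ' (fun k => k * (stirling2 m k * k.factorial * j.choose k)) m,
        Finset.sum_range_succ]
      rw [stirling2_eq_zero_of_lt m.lt_succ_self]
      simp [mul_assoc, mul_comm, mul_left_comm]
    calc j ^ (m+1) = j * j ^ m := by ring
      _ = ∑ k ∈ Finset.range (m+1), stirling2 m k * k.factorial * (j * j.choose k) := by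
          rw [ih, Finset.mul_sum]; exact Finset.sum_congr rfl fun k _ => by ring
      _ = ∑ k ∈ Finset.range (m+1), (stirling2 m k * (k+1).factorial * j.choose (k+1)
            + k * (stirling2 m k * k.factorial * j.choose k)) := by
          refine Finset.sum_congr rfl fun k _ => ?_
          rw [mul_choose_key j k, Nat.factorial_succ]; ring
      _ = ∑ k ∈ Finset.range (m + 2), stirling2 (m+1) k * k.factorial * j.choose k := by
          rw [e1, Finset.sum_add_distrib]
          rw [Finset.sum_congr rfl fun k _ => e2 k, Finset.sum_add_distrib, e3]
          ring

lemma real_exp_hasSum (x : ℝ) : HasSum (fun n : ℕ => x ^ n / n.factorial) (Real.exp x) := by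
  rw [Real.exp_eq_exp_ℝ]
  exact NormedSpace.expSeries_div_hasSum_exp x

lemma choose_exp_hasSum (x : ℝ) (k : ℕ) :
    HasSum (fun j : ℕ => x ^ j / j.factorial * (j.choose k * k.factorial : ℕ))
      (x ^ k * Real.exp x) := by
  set f : ℕ → ℝ := fun j => x ^ j / j.factorial * (j.choose k * k.factorial : ℕ) with hf
  have h1 : HasSum (fun i : ℕ => f (i + k)) (x ^ k * Real.exp x) := by
    refine ((real_exp_hasSum x).mul_left (x ^ k)).congr_fun fun i => ?_
    show x ^ (i + k) / (i + k).factorial * ((i + k).choose k * k.factorial : ℕ)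
        = x ^ k * (x ^ i / i.factorial)
    have hfac : ((i + k).choose k * k.factorial * i.factorial : ℕ) = (i + k).factorial := by
      rw [Nat.mul_right_comm]
      exact Nat.add_choose_mul_factorial_mul_factorial i k
    have hne : ((i + k).factorial : ℝ) ≠ 0 := Nat.cast_ne_zero.2 (Nat.factorial_ne_zero _)
    have hne2 : (i.factorial : ℝ) ≠ 0 := Nat.cast_ne_zero.2 (Nat.factorial_ne_zero _)
    have : ((i + k).choose k * k.factorial : ℝ) = (i + k).factorial / i.factorial := by
      field_simp
      exact_mod_cast hfac
    rw [pow_add]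
    push_cast [this]
    field_simp
  have h2 := (hasSum_nat_add_iff k).mp h1
  have h3 : ∑ i ∈ Finset.range k, f i = 0 := by
    refine Finset.sum_eq_zero fun i hi => ?_
    have : i.choose k = 0 := Nat.choose_eq_zero_of_lt (Finset.mem_range.mp hi)
    simp [hf, this]
  rwa [h3, add_zero] at h2

lemma finite_swap (n : ℕ) (y : ℝ) :
    ∑ m ∈ Finset.range (n+1), ∑ k ∈ Finset.range (m+1),
      ((n.choose m * 2^m * stirling2 m k : ℕ) : ℝ) * (y/2)^k
    = ∑ k ∈ Finset.range (n+1), (stirlingB2 n k : ℝ) * y^k := by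
  rw [Finset.sum_comm' (s' := fun k => Finset.Icc k n) (t' := Finset.range (n+1))
    (fun m k => by simp only [Finset.mem_range, Finset.mem_Icc]; omega)]
  refine Finset.sum_congr rfl fun k hk => ?_
  rw [stirlingB2]
  push_cast
  rw [Finset.sum_mul]
  refine Finset.sum_congr rfl fun m hm => ?_
  have hkm : k ≤ m := (Finset.mem_Icc.mp hm).1
  have h2 : (2:ℝ)^(m-k) * 2^k = 2^m := by
    rw [← pow_add]; congr 1; omega
  have : (2:ℝ) ^ k ≠ 0 := by positivity
  rw [← h2, div_pow]
  field_simp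

lemma nat_expand (n j : ℕ) : (2*j+1)^n
    = ∑ m ∈ Finset.range (n+1), ∑ k ∈ Finset.range (m+1),
        n.choose m * 2^m * (stirling2 m k * k.factorial * j.choose k) := by
  rw [add_pow]
  refine Finset.sum_congr rfl fun m hm => ?_
  rw [one_pow, mul_one, mul_pow, pow_eq_sum_stirling2 m j, Finset.mul_sum, Finset.sum_mul]
  exact Finset.sum_congr rfl fun k _ => by push_cast; ring

lemma col_hasSum (y t : ℝ) (n : ℕ) :
    HasSum (fun j : ℕ => (y/2) ^ j / j.factorial * (((2*j+1) * t) ^ n / n.factorial))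
      (Real.exp (y/2) *
        ((∑ k ∈ Finset.range (n+1), (stirlingB2 n k : ℝ) * y ^ k) * t ^ n / n.factorial)) := by
  set x : ℝ := y / 2 with hx
  have key : HasSum
      (fun j : ℕ => ∑ m ∈ Finset.range (n+1), ∑ k ∈ Finset.range (m+1),
        ((n.choose m * 2^m * stirling2 m k : ℕ) : ℝ) * (t ^ n / n.factorial)
          * (x ^ j / j.factorial * (j.choose k * k.factorial : ℕ)))
      (∑ m ∈ Finset.range (n+1), ∑ k ∈ Finset.range (m+1),
        ((n.choose m * 2^m * stirling2 m k : ℕ) : ℝ) * (t ^ n / n.factorial)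
          * (x ^ k * Real.exp x)) := by
    refine hasSum_sum fun m _ => hasSum_sum fun k _ => ?_
    exact (choose_exp_hasSum x k).mul_left _
  have hfun : ∀ j : ℕ, x ^ j / j.factorial * (((2*j+1) * t) ^ n / n.factorial)
      = ∑ m ∈ Finset.range (n+1), ∑ k ∈ Finset.range (m+1),
        ((n.choose m * 2^m * stirling2 m k : ℕ) : ℝ) * (t ^ n / n.factorial)
          * (x ^ j / j.factorial * (j.choose k * k.factorial : ℕ)) := by
    intro j
    have h2 : ((2*j+1 : ℕ) : ℝ) ^ n
        = ∑ m ∈ Finset.range (n+1), ∑ k ∈ Finset.range (m+1),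
            ((n.choose m * 2^m * (stirling2 m k * k.factorial * j.choose k) : ℕ) : ℝ) := by
      rw [← Nat.cast_pow, nat_expand n j]
      push_cast
      rfl
    have h3 : ((2*j+1 : ℕ) : ℝ) = 2*j+1 := by push_cast; ring
    rw [mul_pow, ← h3, h2]
    simp only [Finset.sum_mul, Finset.mul_sum, Finset.sum_div]
    refine Finset.sum_congr rfl fun m _ => Finset.sum_congr rfl fun k _ => ?_
    push_cast
    ring
  have hval : (∑ m ∈ Finset.range (n+1), ∑ k ∈ Finset.range (m+1),
        ((n.choose m * 2^m * stirling2 m k : ℕ) : ℝ) * (t ^ n / n.factorial)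
          * (x ^ k * Real.exp x))
      = Real.exp x *
        ((∑ k ∈ Finset.range (n+1), (stirlingB2 n k : ℝ) * y ^ k) * t ^ n / n.factorial) := by
    rw [← finite_swap n y, ← hx]
    simp only [Finset.sum_mul, Finset.mul_sum, Finset.sum_div]
    refine Finset.sum_congr rfl fun m _ => Finset.sum_congr rfl fun k _ => ?_
    ring
  rw [← hval]
  exact key.congr_fun fun j => (hfun j)

set_option maxHeartbeats 1000000 in
/-- The exponential generating function identity
`Σ_{k≥0} Σ_{n≥k} S_B(n,k) (t^n/n!) y^k = e^{(y/2)(e^{2t}−1)} · e^t`. -/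
theorem stirlingB2_egf (y t : ℝ) :
    HasSum
      (fun n : ℕ =>
        (∑ k ∈ Finset.range (n + 1), (stirlingB2 n k : ℝ) * y ^ k) * t ^ n / n.factorial)
      (Real.exp (y / 2 * (Real.exp (2 * t) - 1)) * Real.exp t) := by
  set x : ℝ := y / 2 with hx
  set f : ℕ × ℕ → ℝ :=
    fun p => x ^ p.1 / p.1.factorial * (((2 * p.1 + 1) * t) ^ p.2 / p.2.factorial) with hf
  set g : ℕ × ℕ → ℝ :=
    fun p => |x| ^ p.1 / p.1.factorial * (((2 * p.1 + 1) * |t|) ^ p.2 / p.2.factorial) with hg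
  have hgpos : ∀ p, 0 ≤ g p := by
    intro p
    have : (0:ℝ) ≤ 2 * p.1 + 1 := by positivity
    positivity
  have hrowg : ∀ j : ℕ, HasSum (fun n => g (j, n))
      (|x| ^ j / j.factorial * Real.exp ((2 * j + 1) * |t|)) :=
    fun j => (real_exp_hasSum ((2 * j + 1) * |t|)).mul_left _
  have hgsum : Summable g := by
    rw [summable_prod_of_nonneg hgpos]
    constructor
    · exact fun j => (hrowg j).summable
    · refine Summable.congr
        (((real_exp_hasSum (|x| * Real.exp (2 * |t|))).summable.mul_left (Real.exp |t|))) ?_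
      intro j
      rw [(hrowg j).tsum_eq]
      have : Real.exp ((2 * j + 1) * |t|) = Real.exp (2 * |t|) ^ j * Real.exp |t| := by
        rw [← Real.exp_nat_mul, ← Real.exp_add]
        ring_nf
      rw [this, mul_pow]
      ring
  have hfsum : Summable f := by
    refine Summable.of_norm_bounded hgsum fun p => ?_
    have h1 : (0:ℝ) ≤ 2 * p.1 + 1 := by positivity
    have : ‖f p‖ = g p := by
      simp only [hf, hg, norm_mul, norm_div, norm_pow, Real.norm_natCast, Real.norm_eq_abs,
        abs_mul, abs_of_nonneg h1, Nat.abs_cast]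
    exact le_of_eq this
  have hA : HasSum f (∑' p, f p) := hfsum.hasSum
  set A : ℝ := ∑' p, f p with hAdef
  have hrow : ∀ j : ℕ, HasSum (fun n => f (j, n))
      (x ^ j / j.factorial * Real.exp ((2 * j + 1) * t)) :=
    fun j => (real_exp_hasSum ((2 * j + 1) * t)).mul_left _
  have hAgf : HasSum (fun j : ℕ => x ^ j / j.factorial * Real.exp ((2 * j + 1) * t)) A :=
    hA.prod_fiberwise hrow
  have hAval : A = Real.exp t * Real.exp (x * Real.exp (2 * t)) := by
    have h2 : HasSum (fun j : ℕ => x ^ j / j.factorial * Real.exp ((2 * j + 1) * t))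
        (Real.exp t * Real.exp (x * Real.exp (2 * t))) := by
      refine ((real_exp_hasSum (x * Real.exp (2 * t))).mul_left (Real.exp t)).congr_fun ?_
      intro j
      have : Real.exp ((2 * j + 1) * t) = Real.exp (2 * t) ^ j * Real.exp t := by
        rw [← Real.exp_nat_mul, ← Real.exp_add]
        ring_nf
      rw [this, mul_pow]
      ring
    exact hAgf.unique h2
  have hswap : HasSum (fun p : ℕ × ℕ => f p.swap) A :=
    (Equiv.prodComm ℕ ℕ).hasSum_iff.2 hA
  have hcols : HasSum (fun n : ℕ => Real.exp x *
      ((∑ k ∈ Finset.range (n + 1), (stirlingB2 n k : ℝ) * y ^ k) * t ^ n / n.factorial)) A :=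
    hswap.prod_fiberwise fun n => col_hasSum y t n
  have hfinal := hcols.mul_left (Real.exp (-x))
  have hfun : ∀ n : ℕ, Real.exp (-x) * (Real.exp x *
      ((∑ k ∈ Finset.range (n + 1), (stirlingB2 n k : ℝ) * y ^ k) * t ^ n / n.factorial))
      = (∑ k ∈ Finset.range (n + 1), (stirlingB2 n k : ℝ) * y ^ k) * t ^ n / n.factorial := by
    intro n
    rw [← mul_assoc, ← Real.exp_add, neg_add_cancel, Real.exp_zero, one_mul]
  have hval : Real.exp (-x) * A = Real.exp (x * (Real.exp (2 * t) - 1)) * Real.exp t := by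
    rw [hAval, show x * (Real.exp (2*t) - 1) = -x + x * Real.exp (2*t) by ring, Real.exp_add,
      ← mul_assoc]
    ring
  rw [← hval]
  exact hfinal.congr_fun fun n => (hfun n).symm
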